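/- Let Q be a Dynkin quiver on Δ with height function ξ, and let (i_k)_{1≤k≤r} (r ∈ ℤ_{≥1}) be a Q-adapted sequence in I. Set p_k := ξ_{i_k} − 2·|{s ∈ ℤ : 1 ≤ s < k, i_s = i_k}|. Then: (1) p_a > p_b whenever 1 ≤ a < b ≤ r and d(i_a,i_b) ≤ 1; (2) φ_Q(i_k,p_k) = ŝ_{i_1}⋯ŝ_{i_{k−1}}(α_{i_k}, 0) for every 1 ≤ k ≤ r; (3) s_{i_1}⋯s_{i_k}(ϖ_{i_k}) = τ_Q^{(ξ_{i_k}−p_k)/2+1}(ϖ_{i_k}) for every 1 ≤ k ≤ r. -/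

import Mathlib

noncomputable section

open scoped BigOperators

/-- A finite Cartan datum: a connected Dynkin diagram of finite type with vertex set `I`,
Cartan matrix `c`, symmetrizers `d`, simple roots `α`, fundamental weights `ϖ`, an invariant
symmetric bilinear form `form` (normalized so that `(α,α) = 2` for short roots, i.e. some
`d i = 1`), simple reflections `s` acting on the weight lattice `V`, the set of positive
roots `Φ`, the longest element `w0` (with induced involution `star`), and Coxeter number
`hcox`. -/
structure SSDatum where
  I : Type
  [fintypeI : Fintype I]
  [decEqI : DecidableEq I]
  [nonemptyI : Nonempty I]
  V : Type
  [acgV : AddCommGroup V]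
  [modV : Module ℚ V]
  [decEqV : DecidableEq V]
  c : I → I → ℤ
  d : I → ℤ
  α : I → V
  ϖ : I → V
  form : V → V → ℚ
  s : I → (V ≃ₗ[ℚ] V)
  Φ : Finset V
  w0 : V ≃ₗ[ℚ] V
  star : I → I
  hcox : ℤ
  c_diag : ∀ i, c i i = 2
  c_nonpos : ∀ i j, i ≠ j → c i j ≤ 0
  c_zero_sym : ∀ i j, c i j = 0 → c j i = 0
  connected : ∀ i j, Relation.ReflTransGen (fun a b => a ≠ b ∧ c a b ≠ 0) i j
  d_pos : ∀ i, 0 < d i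
  d_one : ∃ i, d i = 1
  d_symmetrize : ∀ i j, d i * c i j = d j * c j i
  exists_basis : ∃ b : Module.Basis I ℚ V, ∀ i, b i = ϖ i
  form_symm : ∀ x y, form x y = form y x
  form_add : ∀ x y z, form (x + y) z = form x z + form y z
  form_smul : ∀ (a : ℚ) (x y), form (a • x) y = a * form x y
  form_alpha : ∀ i j, form (α i) (α j) = (d i : ℚ) * (c i j : ℚ)
  form_alpha_omega : ∀ i j, form (α i) (ϖ j) = if i = j then (d i : ℚ) else 0
  form_inv : ∀ i x y, form (s i x) (s i y) = form x y
  s_omega : ∀ i j, s i (ϖ j) = ϖ j - (if i = j then (1 : ℚ) else 0) • α i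
  s_alpha : ∀ i j, s i (α j) = α j - ((c i j : ℚ)) • α i
  alpha_mem : ∀ i, α i ∈ Φ
  zero_not_mem : (0 : V) ∉ Φ
  pos_comb : ∀ β ∈ Φ, ∃ f : I → ℕ, β = ∑ i, (f i : ℚ) • α i
  s_perm : ∀ i, ∀ β ∈ Φ, β ≠ α i → s i β ∈ Φ
  w0_mem : w0 ∈ Subgroup.closure (Set.range s)
  w0_alpha : ∀ i, w0 (α i) = - α (star i)
  star_invol : ∀ i, star (star i) = i
  w0_neg : ∀ β ∈ Φ, -(w0 β) ∈ Φ
  hcox_pos : 0 < hcox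
  hcox_card : hcox * (Fintype.card I : ℤ) = 2 * (Φ.card : ℤ)

attribute [instance] SSDatum.fintypeI SSDatum.decEqI SSDatum.nonemptyI
attribute [instance] SSDatum.acgV SSDatum.modV SSDatum.decEqV

namespace SSDatum

variable (D : SSDatum)

/-- The underlying graph of the Dynkin diagram. -/
def graph : SimpleGraph D.I where
  Adj a b := a ≠ b ∧ D.c a b ≠ 0
  symm := by
    refine ⟨?_⟩
    intro a b h
    exact ⟨h.1.symm, fun hz => h.2 (D.c_zero_sym b a hz)⟩
  loopless := by
    refine ⟨?_⟩
    intro a h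
    exact h.1 rfl

/-- The graph distance `d(i,j)` in the Dynkin diagram. -/
def dist (i j : D.I) : ℕ := D.graph.dist i j

/-- The product `s_{i_1} ⋯ s_{i_r}` of simple reflections along a word. -/
def wordProd (l : List D.I) : D.V ≃ₗ[ℚ] D.V := (l.map D.s).prod

/-- The length of an element of the Weyl group. -/
def len (w : D.V ≃ₗ[ℚ] D.V) : ℕ :=
  sInf {n | ∃ l : List D.I, l.length = n ∧ D.wordProd l = w}

/-- A word is a reduced expression of its product. -/
def IsReducedWord (l : List D.I) : Prop := l.length = D.len (D.wordProd l)

/-- The map `ŵ` on `Φ⁺ × ℤ`: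
`ŵ(β,k) = (wβ, k)` if `wβ ∈ Φ⁺` and `ŵ(β,k) = (−wβ, k−1)` otherwise. -/
def hat (w : D.V ≃ₗ[ℚ] D.V) (x : D.V × ℤ) : D.V × ℤ :=
  if w x.1 ∈ D.Φ then (w x.1, x.2) else (-(w x.1), x.2 - 1)

/-- The map `(ŵ)⁻¹` on `Φ⁺ × ℤ`. -/
def hatInv (w : D.V ≃ₗ[ℚ] D.V) (x : D.V × ℤ) : D.V × ℤ :=
  if w⁻¹ x.1 ∈ D.Φ then (w⁻¹ x.1, x.2) else (-(w⁻¹ x.1), x.2 + 1)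

/-- `ξ` is a height function on the Dynkin diagram. -/
def IsHeight (ξ : D.I → ℤ) : Prop :=
  ∀ i j, D.dist i j = 1 → ξ i - ξ j = 1 ∨ ξ j - ξ i = 1

/-- `i` is a source of the Dynkin quiver `(Δ, ξ)`. -/
def IsSource (ξ : D.I → ℤ) (i : D.I) : Prop :=
  ∀ j, D.dist i j = 1 → ξ j < ξ i

/-- The height function of the reflected quiver `s_i Q`. -/
def rHeight (ξ : D.I → ℤ) (i : D.I) : D.I → ℤ :=
  fun j => if j = i then ξ i - 2 else ξ j

/-- A sequence in `I` is adapted to the Dynkin quiver `(Δ, ξ)`. -/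
def Adapted (ξ : D.I → ℤ) : List D.I → Prop
  | [] => True
  | i :: l => D.IsSource ξ i ∧ Adapted (D.rHeight ξ i) l

/-- `τ` is the Coxeter element `τ_Q` attached to the Dynkin quiver with height function `ξ`:
it has a `Q`-adapted reduced expression in which each simple reflection occurs exactly once. -/
def IsCoxeterFor (ξ : D.I → ℤ) (τ : D.V ≃ₗ[ℚ] D.V) : Prop :=
  ∃ l : List D.I, l.Nodup ∧ (∀ i, i ∈ l) ∧ D.Adapted ξ l ∧ D.wordProd l = τ

/-- `γ_i^Q = (1 - τ_Q) ϖ_i`. -/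
def gam (τ : D.V ≃ₗ[ℚ] D.V) (i : D.I) : D.V := D.ϖ i - τ (D.ϖ i)

/-- The map `φ_Q : Δ̂₀ → Φ⁺ × ℤ`, defined inductively from
`φ_Q(i, ξ_i) = (γ_i^Q, 0)` by applying `(τ̂_Q)^{∓1}` when moving `p ↦ p ± 2`. -/
def phi (ξ : D.I → ℤ) (τ : D.V ≃ₗ[ℚ] D.V) (i : D.I) (p : ℤ) : D.V × ℤ :=
  if p ≤ ξ i then (D.hat τ)^[((ξ i - p) / 2).toNat] (D.gam τ i, 0)
  else (D.hatInv τ)^[((p - ξ i) / 2).toNat] (D.gam τ i, 0)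

/-- The function `η_{i,j}^Q : ℤ → ℚ`. -/
def eta (ξ : D.I → ℤ) (τ : D.V ≃ₗ[ℚ] D.V) (i j : D.I) (u : ℤ) : ℚ :=
  if (u + ξ j - ξ i - 1) % 2 = 0 then
    D.form (D.ϖ i) ((τ ^ ((u + ξ j - ξ i - 1) / 2)) (D.gam τ j))
  else 0

end SSDatum

/-- The variable `t` of the field of formal Laurent series `ℚ((t))`. -/
def tq : LaurentSeries ℚ := HahnSeries.single 1 1

namespace SSDatum

variable (D : SSDatum)

/-- The symmetrized `t`-quantized Cartan matrix `B(t) = C(t) · D⁻¹`, where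
`C(t)_{i,i} = t + t⁻¹` and `C(t)_{i,j} = c_{i,j}` for `i ≠ j`. -/
def Bt : Matrix D.I D.I (LaurentSeries ℚ) :=
  Matrix.of fun i j =>
    (if i = j then tq + tq⁻¹ else (D.c i j : LaurentSeries ℚ)) * ((D.d j : LaurentSeries ℚ))⁻¹

/-- `b̃_{i,j}(u)`: the coefficient of `t^u` in the Laurent expansion of `(B(t)⁻¹)_{i,j}`. -/
def btilde (i j : D.I) (u : ℤ) : ℚ := ((D.Bt)⁻¹ i j).coeff u

/-- `Ñ(i,p;j,s) = b̃_{i,j}(p−s−1) − b̃_{i,j}(s−p−1) − b̃_{i,j}(p−s+1) + b̃_{i,j}(s−p+1)`. -/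
def Ncal (i : D.I) (p : ℤ) (j : D.I) (q : ℤ) : ℚ :=
  D.btilde i j (p - q - 1) - D.btilde i j (q - p - 1)
    - D.btilde i j (p - q + 1) + D.btilde i j (q - p + 1)

end SSDatum

namespace SSDatum

variable {D : SSDatum}

lemma mulApp (f g : D.V ≃ₗ[ℚ] D.V) (x : D.V) : (f * g) x = f (g x) := rfl

lemma oneApp (x : D.V) : (1 : D.V ≃ₗ[ℚ] D.V) x = x := rfl

lemma form_zero (y : D.V) : D.form 0 y = 0 := by
  have h := D.form_add 0 0 y
  rw [add_zero] at h
  linarith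

lemma form_sum {ι : Type*} (t : Finset ι) (g : ι → D.V) (y : D.V) :
    D.form (∑ k ∈ t, g k) y = ∑ k ∈ t, D.form (g k) y := by
  classical
  induction t using Finset.cons_induction with
  | empty => simp [form_zero]
  | cons a t ha ih => rw [Finset.sum_cons, Finset.sum_cons, D.form_add, ih]

lemma form_posroot_omega {β : D.V} (f : D.I → ℕ) (hβ : β = ∑ k, (f k : ℚ) • D.α k) (i : D.I) :
    D.form β (D.ϖ i) = (f i : ℚ) * (D.d i : ℚ) := by
  subst hβ
  rw [form_sum]
  have : ∀ k, D.form ((f k : ℚ) • D.α k) (D.ϖ i) =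
      if k = i then (f k : ℚ) * (D.d k : ℚ) else 0 := by
    intro k
    rw [D.form_smul, D.form_alpha_omega]
    split <;> simp
  simp only [this]
  simp

lemma neg_not_mem {β : D.V} (hβ : β ∈ D.Φ) : -β ∉ D.Φ := by
  intro hneg
  obtain ⟨f, hf⟩ := D.pos_comb β hβ
  obtain ⟨g, hg⟩ := D.pos_comb (-β) hneg
  have key : ∀ i, (f i : ℚ) = 0 := by
    intro i
    have h1 := form_posroot_omega f hf i
    have h2 := form_posroot_omega g hg i
    have h3 : D.form β (D.ϖ i) + D.form (-β) (D.ϖ i) = 0 := by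
      rw [← D.form_add, add_neg_cancel, form_zero]
    have hd : (0:ℚ) < (D.d i : ℚ) := by exact_mod_cast D.d_pos i
    have hf0 : (0:ℚ) ≤ (f i : ℚ) := Nat.cast_nonneg _
    have hg0 : (0:ℚ) ≤ (g i : ℚ) := Nat.cast_nonneg _
    nlinarith
  have : β = 0 := by
    rw [hf]
    apply Finset.sum_eq_zero
    intro k _
    rw [key k, zero_smul]
  exact D.zero_not_mem (this ▸ hβ)

lemma equiv_ext_omega {f g : D.V ≃ₗ[ℚ] D.V} (h : ∀ j, f (D.ϖ j) = g (D.ϖ j)) : f = g := by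
  obtain ⟨b, hb⟩ := D.exists_basis
  apply LinearEquiv.toLinearMap_injective
  apply Module.Basis.ext b
  intro j
  simp only [LinearEquiv.coe_coe, hb]
  exact h j

lemma s_omega_ne {j i : D.I} (h : j ≠ i) : D.s j (D.ϖ i) = D.ϖ i := by
  rw [D.s_omega, if_neg h, zero_smul, sub_zero]

lemma s_omega_self (i : D.I) : D.s i (D.ϖ i) = D.ϖ i - D.α i := by
  rw [D.s_omega, if_pos rfl, one_smul]

lemma s_alpha_self (i : D.I) : D.s i (D.α i) = -D.α i := by
  rw [D.s_alpha, D.c_diag]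
  push_cast
  module

lemma s_mul_s (i : D.I) : D.s i * D.s i = 1 := by
  apply equiv_ext_omega
  intro j
  rw [mulApp, oneApp]
  by_cases h : i = j
  · subst h
    rw [s_omega_self, map_sub, s_omega_self, s_alpha_self]
    module
  · have h2 : D.s i (D.ϖ j) = D.ϖ j := s_omega_ne h
    rw [h2, h2]

lemma s_inv (i : D.I) : (D.s i)⁻¹ = D.s i :=
  inv_eq_of_mul_eq_one_right (s_mul_s i)

lemma s_apply_s (i : D.I) (x : D.V) : D.s i (D.s i x) = x := by
  have := congrArg (fun w : D.V ≃ₗ[ℚ] D.V => w x) (s_mul_s i)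
  simpa [mulApp, oneApp] using this

lemma s_comm {i j : D.I} (hij : i ≠ j) (hc : D.c i j = 0) : D.s i * D.s j = D.s j * D.s i := by
  have hc' : D.c j i = 0 := D.c_zero_sym i j hc
  apply equiv_ext_omega
  intro k
  rw [mulApp, mulApp]
  by_cases hik : i = k
  · subst hik
    have h1 : D.s j (D.ϖ i) = D.ϖ i := s_omega_ne hij.symm
    rw [h1, s_omega_self, map_sub, h1, D.s_alpha, hc']
    push_cast
    module
  · by_cases hjk : j = k
    · subst hjk
      have h1 : D.s i (D.ϖ j) = D.ϖ j := s_omega_ne hik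
      rw [h1, s_omega_self, map_sub, h1, D.s_alpha, hc]
      push_cast
      module
    · have h1 : D.s j (D.ϖ k) = D.ϖ k := s_omega_ne hjk
      have h2 : D.s i (D.ϖ k) = D.ϖ k := s_omega_ne hik
      rw [h1, h2, h1]

lemma wordProd_nil : D.wordProd [] = 1 := rfl

lemma wordProd_cons (i : D.I) (l : List D.I) :
    D.wordProd (i :: l) = D.s i * D.wordProd l := by
  simp [wordProd]

lemma wordProd_append (u v : List D.I) :
    D.wordProd (u ++ v) = D.wordProd u * D.wordProd v := by
  simp [wordProd]

lemma wordProd_singleton (i : D.I) : D.wordProd [i] = D.s i := by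
  simp [wordProd]

lemma wordProd_fix_omega {i : D.I} : ∀ {m : List D.I}, i ∉ m → D.wordProd m (D.ϖ i) = D.ϖ i := by
  intro m
  induction m with
  | nil => intro _; rfl
  | cons j m ih =>
    intro h
    have h1 : i ∉ m := fun hm => h (List.mem_cons_of_mem _ hm)
    have h2 : j ≠ i := by rintro rfl; exact h List.mem_cons_self
    rw [wordProd_cons, mulApp, ih h1, s_omega_ne h2]

lemma s_sub_of_mem {β : D.V} (hβ : β ∈ D.Φ) (j : D.I) :
    ∃ q : ℚ, D.s j β = β - q • D.α j := by
  obtain ⟨f, hf⟩ := D.pos_comb β hβ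
  refine ⟨∑ k, (f k : ℚ) * (D.c j k : ℚ), ?_⟩
  subst hf
  rw [map_sum]
  simp only [map_smul, D.s_alpha, smul_sub]
  rw [Finset.sum_sub_distrib, Finset.sum_smul]
  congr 1
  apply Finset.sum_congr rfl
  intro k _
  rw [smul_smul]

lemma wordProd_alpha_pos {i : D.I} :
    ∀ {m : List D.I}, i ∉ m →
      D.wordProd m (D.α i) ∈ D.Φ ∧ D.form (D.wordProd m (D.α i)) (D.ϖ i) = (D.d i : ℚ) := by
  intro m
  induction m with
  | nil =>
    intro _
    refine ⟨D.alpha_mem i, ?_⟩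
    rw [wordProd_nil, oneApp, D.form_alpha_omega, if_pos rfl]
  | cons j m ih =>
    intro h
    have hji : j ≠ i := by rintro rfl; exact h List.mem_cons_self
    obtain ⟨hv, hform⟩ := ih (fun hm => h (List.mem_cons_of_mem _ hm))
    set v := D.wordProd m (D.α i) with hvdef
    have hd : (0:ℚ) < (D.d i : ℚ) := by exact_mod_cast D.d_pos i
    have hvne : v ≠ D.α j := by
      intro heq
      rw [heq, D.form_alpha_omega, if_neg hji] at hform
      linarith
    obtain ⟨q, hq⟩ := s_sub_of_mem hv j
    constructor
    · rw [wordProd_cons, mulApp, ← hvdef]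
      exact D.s_perm j v hv hvne
    · rw [wordProd_cons, mulApp, ← hvdef, hq]
      have : D.form (v - q • D.α j) (D.ϖ i) = D.form v (D.ϖ i) - q * D.form (D.α j) (D.ϖ i) := by
        have h1 := D.form_add (v - q • D.α j) (q • D.α j) (D.ϖ i)
        rw [sub_add_cancel] at h1
        rw [D.form_smul] at h1
        linarith
      rw [this, D.form_alpha_omega, if_neg hji, mul_zero, sub_zero, hform]

lemma wordProd_pm (m : List D.I) {β : D.V} (hβ : β ∈ D.Φ) :
    D.wordProd m β ∈ D.Φ ∨ -(D.wordProd m β) ∈ D.Φ := by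
  induction m with
  | nil => left; exact hβ
  | cons j m ih =>
    rw [wordProd_cons, mulApp]
    rcases ih with h | h
    · by_cases he : D.wordProd m β = D.α j
      · right
        rw [he, s_alpha_self, neg_neg]
        exact D.alpha_mem j
      · left; exact D.s_perm j _ h he
    · by_cases he : -(D.wordProd m β) = D.α j
      · left
        have : D.wordProd m β = -D.α j := by rw [← he, neg_neg]
        rw [this, map_neg, s_alpha_self, neg_neg]
        exact D.alpha_mem j
      · right
        rw [← map_neg]
        exact D.s_perm j _ h he

lemma wordProd_reverse (m : List D.I) : D.wordProd m.reverse = (D.wordProd m)⁻¹ := by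
  induction m with
  | nil => simp [wordProd_nil]
  | cons j m ih =>
    rw [List.reverse_cons, wordProd_append, ih, wordProd_singleton, wordProd_cons,
      mul_inv_rev, s_inv]

lemma hat_of_mem {w : D.V ≃ₗ[ℚ] D.V} {x : D.V × ℤ} (h : w x.1 ∈ D.Φ) :
    D.hat w x = (w x.1, x.2) := by
  unfold hat; rw [if_pos h]

lemma hat_of_not_mem {w : D.V ≃ₗ[ℚ] D.V} {x : D.V × ℤ} (h : w x.1 ∉ D.Φ) :
    D.hat w x = (-(w x.1), x.2 - 1) := by
  unfold hat; rw [if_neg h]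

lemma hat_wordProd_fst_mem (m : List D.I) {x : D.V × ℤ} (hx : x.1 ∈ D.Φ) :
    (D.hat (D.wordProd m) x).1 ∈ D.Φ := by
  by_cases h : D.wordProd m x.1 ∈ D.Φ
  · rw [hat_of_mem h]; exact h
  · rw [hat_of_not_mem h]
    rcases wordProd_pm m hx with h' | h'
    · exact absurd h' h
    · exact h'

lemma hat_swap {i : D.I} {rest : List D.I} (hr : i ∉ rest) {x : D.V × ℤ} (hx : x.1 ∈ D.Φ) :
    D.hat (D.s i) (D.hat (D.wordProd rest * D.s i) x) =
    D.hat (D.s i * D.wordProd rest) (D.hat (D.s i) x) := by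
  obtain ⟨β, k⟩ := x
  simp only at hx
  set wr := D.wordProd rest with hwr
  have hneg_alpha : -D.α i ∉ D.Φ := neg_not_mem (D.alpha_mem i)
  have hwri : ∀ y : D.V, (wr * D.s i) y = wr (D.s i y) := fun y => rfl
  have hiwr : ∀ y : D.V, (D.s i * wr) y = D.s i (wr y) := fun y => rfl
  by_cases hβi : β = D.α i
  · subst hβi
    have hwra : wr (D.α i) ∈ D.Φ := (wordProd_alpha_pos hr).1
    have hc1 : (wr * D.s i) ((D.α i, k).1) ∉ D.Φ := by
      show wr (D.s i (D.α i)) ∉ D.Φ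
      rw [s_alpha_self, map_neg]
      exact fun hm => neg_not_mem hwra hm
    have hc2 : D.s i ((D.α i, k).1) ∉ D.Φ := by
      show D.s i (D.α i) ∉ D.Φ
      rw [s_alpha_self]; exact hneg_alpha
    rw [hat_of_not_mem hc1, hat_of_not_mem hc2]
    have e1 : (-(wr * D.s i) (D.α i, k).1, (D.α i, k).2 - 1) = (wr (D.α i), k - 1) := by
      show (-(wr (D.s i (D.α i))), k - 1) = _
      rw [s_alpha_self, map_neg, neg_neg]
    have e2 : (-D.s i (D.α i, k).1, (D.α i, k).2 - 1) = (D.α i, k - 1) := by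
      show (-(D.s i (D.α i)), k - 1) = _
      rw [s_alpha_self, neg_neg]
    rw [e1, e2]
    by_cases hw : D.s i (wr (D.α i)) ∈ D.Φ
    · rw [hat_of_mem (show D.s i ((wr (D.α i), k - 1).1) ∈ D.Φ from hw),
        hat_of_mem (show (D.s i * wr) ((D.α i, k - 1).1) ∈ D.Φ from hw)]
      rfl
    · rw [hat_of_not_mem (show D.s i ((wr (D.α i), k - 1).1) ∉ D.Φ from hw),
        hat_of_not_mem (show (D.s i * wr) ((D.α i, k - 1).1) ∉ D.Φ from hw)]
      rfl
  · have hsβ : D.s i β ∈ D.Φ := D.s_perm i β hx hβi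
    rw [hat_of_mem (show D.s i ((β, k).1) ∈ D.Φ from hsβ)]
    by_cases hv : wr (D.s i β) ∈ D.Φ
    · rw [hat_of_mem (show (wr * D.s i) ((β, k).1) ∈ D.Φ from hv)]
      by_cases hw : D.s i (wr (D.s i β)) ∈ D.Φ
      · rw [hat_of_mem (show D.s i (((wr * D.s i) (β, k).1, (β, k).2)).1 ∈ D.Φ from hw),
          hat_of_mem (show (D.s i * wr) ((D.s i β, k).1) ∈ D.Φ from hw)]
        rfl
      · rw [hat_of_not_mem (show D.s i (((wr * D.s i) (β, k).1, (β, k).2)).1 ∉ D.Φ from hw),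
          hat_of_not_mem (show (D.s i * wr) ((D.s i β, k).1) ∉ D.Φ from hw)]
        rfl
    · have hv' : -(wr (D.s i β)) ∈ D.Φ := by
        rcases wordProd_pm rest hsβ with h | h
        · exact absurd h hv
        · exact h
      rw [hat_of_not_mem (show (wr * D.s i) ((β, k).1) ∉ D.Φ from hv)]
      have hvne : -(wr (D.s i β)) ≠ D.α i := by
        intro heq
        have hveq : wr (D.s i β) = -D.α i := by rw [← heq, neg_neg]
        have h5 : D.wordProd rest.reverse (wr (D.s i β)) = D.s i β := by
          rw [wordProd_reverse, ← hwr]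
          exact wr.symm_apply_apply _
        have hir : i ∉ rest.reverse := by simpa using hr
        have h6 : D.wordProd rest.reverse (D.α i) ∈ D.Φ := (wordProd_alpha_pos hir).1
        rw [hveq, map_neg] at h5
        have h7 : D.s i β = -(D.wordProd rest.reverse (D.α i)) := by rw [← h5]
        rw [h7] at hsβ
        exact neg_not_mem h6 hsβ
      have h5 : D.s i (-(wr (D.s i β))) ∈ D.Φ := D.s_perm i _ hv' hvne
      have h7 : D.s i (wr (D.s i β)) ∉ D.Φ := by
        have he : D.s i (wr (D.s i β)) = -(D.s i (-(wr (D.s i β)))) := by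
          rw [map_neg, neg_neg]
        rw [he]
        exact neg_not_mem h5
      rw [hat_of_mem (show D.s i ((-(wr * D.s i) (β, k).1, (β, k).2 - 1)).1 ∈ D.Φ from h5),
        hat_of_not_mem (show (D.s i * wr) ((D.s i β, k).1) ∉ D.Φ from h7)]
      show (D.s i (-(wr (D.s i β))), k - 1) = (-(D.s i (wr (D.s i β))), k - 1)
      rw [map_neg]

lemma hat_swap_iter {i : D.I} {rest : List D.I} (hr : i ∉ rest) (n : ℕ) :
    ∀ {x : D.V × ℤ}, x.1 ∈ D.Φ →
      D.hat (D.s i) ((D.hat (D.wordProd rest * D.s i))^[n] x) =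
      (D.hat (D.s i * D.wordProd rest))^[n] (D.hat (D.s i) x) := by
  induction n with
  | zero => intro x _; rfl
  | succ n ih =>
    intro x hx
    rw [Function.iterate_succ_apply, Function.iterate_succ_apply]
    have hmem : (D.hat (D.wordProd rest * D.s i) x).1 ∈ D.Φ := by
      have he : D.wordProd rest * D.s i = D.wordProd (rest ++ [i]) := by
        rw [wordProd_append, wordProd_singleton]
      rw [he]
      exact hat_wordProd_fst_mem _ hx
    rw [ih hmem, hat_swap hr hx]

lemma adapted_cons_iff {ξ : D.I → ℤ} {i : D.I} {l : List D.I} :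
    D.Adapted ξ (i :: l) ↔ D.IsSource ξ i ∧ D.Adapted (D.rHeight ξ i) l := Iff.rfl

lemma adapted_nil_iff {ξ : D.I → ℤ} : D.Adapted ξ ([] : List D.I) := trivial

end SSDatum

namespace SSDatum

/-- The height function after applying a word of reflections. -/
def heightAfter (D : SSDatum) (ξ : D.I → ℤ) (m : List D.I) : D.I → ℤ :=
  fun j => ξ j - 2 * (m.count j : ℤ)

variable {D : SSDatum}

lemma heightAfter_nil (ξ : D.I → ℤ) : D.heightAfter ξ [] = ξ := by
  funext x; simp [heightAfter]

lemma heightAfter_cons (ξ : D.I → ℤ) (j : D.I) (m : List D.I) :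
    D.heightAfter (D.rHeight ξ j) m = D.heightAfter ξ (j :: m) := by
  funext x
  simp only [heightAfter, rHeight, List.count_cons]
  by_cases h : x = j
  · subst h; simp; omega
  · have h2 : ¬j = x := fun hh => h hh.symm
    simp [h, h2]

lemma adapted_append {v : List D.I} : ∀ {u : List D.I} {ξ : D.I → ℤ},
    D.Adapted ξ (u ++ v) ↔ D.Adapted ξ u ∧ D.Adapted (D.heightAfter ξ u) v := by
  intro u
  induction u with
  | nil =>
    intro ξ
    rw [heightAfter_nil]
    simp [adapted_nil_iff]
  | cons j u ih =>
    intro ξ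
    rw [List.cons_append, adapted_cons_iff, adapted_cons_iff, ih, heightAfter_cons, and_assoc]

lemma adapted_sourceAt {ξ : D.I → ℤ} {u : List D.I} {j : D.I} {v : List D.I}
    (h : D.Adapted ξ (u ++ j :: v)) : D.IsSource (D.heightAfter ξ u) j :=
  (adapted_cons_iff.mp (adapted_append.mp h).2).1

lemma adapted_get_source {ξ : D.I → ℤ} {l : List D.I} (h : D.Adapted ξ l) (k : Fin l.length) :
    D.IsSource (D.heightAfter ξ (l.take k.val)) (l.get k) := by
  have hsplit : l = l.take k.val ++ l.get k :: l.drop (k.val + 1) := by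
    conv_lhs => rw [← List.take_append_drop k.val l]
    congr 1
    rw [List.drop_eq_getElem_cons k.isLt, List.get_eq_getElem]
  exact adapted_sourceAt (by rw [← hsplit]; exact h)

lemma isSource_mono {h h' : D.I → ℤ} {j : D.I} (hle : ∀ x, h' x ≤ h x) (hj : h' j = h j)
    (hs : D.IsSource h j) : D.IsSource h' j := by
  intro x hx
  exact lt_of_le_of_lt (hle x) (hj ▸ hs x hx)

lemma adapted_of_le : ∀ {u : List D.I} {h h' : D.I → ℤ}, (∀ x, h' x ≤ h x) →
    (∀ x ∈ u, h' x = h x) → D.Adapted h u → D.Adapted h' u := by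
  intro u
  induction u with
  | nil => intro _ _ _ _ _; trivial
  | cons j u ih =>
    intro h h' hle heq had
    obtain ⟨hsrc, had'⟩ := adapted_cons_iff.mp had
    refine adapted_cons_iff.mpr ⟨isSource_mono hle (heq j List.mem_cons_self) hsrc, ?_⟩
    apply ih (h := D.rHeight h j)
    · intro x
      by_cases hx : x = j
      · subst hx; simp only [rHeight, if_pos]; have := heq x List.mem_cons_self; omega
      · simp only [rHeight, if_neg hx]; exact hle x
    · intro x hx
      by_cases hxj : x = j
      · subst hxj; simp only [rHeight, if_pos]
        have := heq x List.mem_cons_self; omega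
      · simp only [rHeight, if_neg hxj]
        exact heq x (List.mem_cons_of_mem _ hx)
    · exact had'

lemma dist_eq_one_of_c {i j : D.I} (hij : i ≠ j) (hc : D.c i j ≠ 0) : D.dist i j = 1 :=
  SimpleGraph.dist_eq_one_iff_adj.mpr ⟨hij, hc⟩

lemma dist_comm' (i j : D.I) : D.dist i j = D.dist j i := SimpleGraph.dist_comm

lemma eq_of_dist_eq_zero {i j : D.I} (h : D.dist i j = 0) : i = j := by
  have hreach : D.graph.Reachable i j :=
    (SimpleGraph.reachable_iff_reflTransGen i j).mpr (D.connected i j)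
  exact (hreach.dist_eq_zero_iff).mp h

lemma commute_word {i : D.I} : ∀ {u : List D.I}, (∀ j ∈ u, D.c i j = 0 ∧ j ≠ i) →
    D.s i * D.wordProd u = D.wordProd u * D.s i := by
  intro u
  induction u with
  | nil => intro _; rw [wordProd_nil, mul_one, one_mul]
  | cons j u ih =>
    intro h
    obtain ⟨hc, hji⟩ := h j List.mem_cons_self
    have hrec := ih (fun x hx => h x (List.mem_cons_of_mem _ hx))
    rw [wordProd_cons, ← mul_assoc, s_comm (Ne.symm hji) hc, mul_assoc, hrec, ← mul_assoc]

lemma rearrange {ξ : D.I → ℤ} {τ : D.V ≃ₗ[ℚ] D.V} (hτ : D.IsCoxeterFor ξ τ) {i : D.I}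
    (hi : D.IsSource ξ i) :
    ∃ rest : List D.I, i ∉ rest ∧ rest.Nodup ∧ (∀ j, j ≠ i → j ∈ rest) ∧
      D.Adapted (D.rHeight ξ i) rest ∧ τ = D.s i * D.wordProd rest := by
  obtain ⟨l₀, hnd, hall, hadQ, hprod⟩ := hτ
  obtain ⟨u, v, huv⟩ := List.append_of_mem (hall i)
  subst huv
  have hiu : i ∉ u := fun hm => (List.nodup_append.mp hnd).2.2 i hm i List.mem_cons_self rfl
  have hiv : i ∉ v := (List.nodup_cons.mp (List.nodup_append.mp hnd).2.1).1
  have hnonadj : ∀ j ∈ u, D.c i j = 0 ∧ j ≠ i := by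
    intro j hj
    have hji : j ≠ i := fun h => hiu (h ▸ hj)
    refine ⟨?_, hji⟩
    by_contra hc
    have hadj : D.dist i j = 1 := dist_eq_one_of_c (Ne.symm hji) hc
    obtain ⟨u₁, u₂, hu⟩ := List.append_of_mem hj
    have hndu : u.Nodup := (List.nodup_append.mp hnd).1
    have hju1 : j ∉ u₁ := by
      rw [hu] at hndu
      exact fun hm => (List.nodup_append.mp hndu).2.2 j hm j List.mem_cons_self rfl
    have hiu₁ : i ∉ u₁ := fun hm => hiu (hu ▸ List.mem_append_left _ hm)
    have hsrc : D.IsSource (D.heightAfter ξ u₁) j := by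
      apply adapted_sourceAt (v := u₂ ++ i :: v)
      have : u ++ i :: v = u₁ ++ j :: (u₂ ++ i :: v) := by rw [hu]; simp
      rw [← this]; exact hadQ
    have hhi : D.heightAfter ξ u₁ i = ξ i := by
      simp [heightAfter, List.count_eq_zero_of_not_mem hiu₁]
    have hhj : D.heightAfter ξ u₁ j = ξ j := by
      simp [heightAfter, List.count_eq_zero_of_not_mem hju1]
    have h1 : ξ i < ξ j := by
      have := hsrc i (by rw [show D.dist j i = D.dist i j from dist_comm' j i]; exact hadj)
      rw [hhi, hhj] at this; exact this
    have h2 : ξ j < ξ i := hi j hadj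
    omega
  have hcomm : D.s i * D.wordProd u = D.wordProd u * D.s i := commute_word hnonadj
  refine ⟨u ++ v, ?_, ?_, ?_, ?_, ?_⟩
  · simp only [List.mem_append]; rintro (h | h); exacts [hiu h, hiv h]
  · exact hnd.sublist (List.Sublist.append_left (List.sublist_cons_self i v) u)
  · intro j hji
    have := hall j
    rw [List.mem_append, List.mem_cons] at this
    rw [List.mem_append]
    rcases this with h | h | h
    · exact Or.inl h
    · exact absurd h hji
    · exact Or.inr h
  · rw [adapted_append]
    constructor
    · have hu : D.Adapted ξ u := (adapted_append.mp hadQ).1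
      apply adapted_of_le _ _ hu
      · intro x
        by_cases hx : x = i
        · subst hx; simp only [rHeight, if_pos]; omega
        · simp only [rHeight, if_neg hx]; omega
      · intro x hxu
        have hxi : x ≠ i := fun h => hiu (h ▸ hxu)
        simp only [rHeight, if_neg hxi]
    · have hv' : D.Adapted (D.heightAfter ξ (u ++ [i])) v := by
        have h2 : D.Adapted ξ ((u ++ [i]) ++ v) := by
          have : (u ++ [i]) ++ v = u ++ i :: v := by simp
          rw [this]; exact hadQ
        exact (adapted_append.mp h2).2
      have he : D.heightAfter (D.rHeight ξ i) u = D.heightAfter ξ (u ++ [i]) := by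
        funext x
        simp only [heightAfter, rHeight, List.count_append, List.count_singleton]
        by_cases hx : x = i
        · subst hx; simp; omega
        · have h2 : ¬i = x := fun hh => hx hh.symm
          simp [hx, h2]
      rw [he]; exact hv'
  · rw [wordProd_append, wordProd_cons] at hprod
    rw [wordProd_append, ← hprod, ← mul_assoc, ← mul_assoc, hcomm]

lemma coxeter_reflect {ξ : D.I → ℤ} {τ : D.V ≃ₗ[ℚ] D.V} (hτ : D.IsCoxeterFor ξ τ) {i : D.I}
    (hi : D.IsSource ξ i) : D.IsCoxeterFor (D.rHeight ξ i) (D.s i * τ * D.s i) := by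
  obtain ⟨rest, hir, hndr, hcomp, hadr, hτeq⟩ := rearrange hτ hi
  refine ⟨rest ++ [i], ?_, ?_, ?_, ?_⟩
  · rw [List.nodup_append]
    refine ⟨hndr, List.nodup_singleton i, ?_⟩
    intro a ha b hb hab
    rw [List.mem_singleton] at hb
    subst hb; subst hab; exact hir ha
  · intro j
    rw [List.mem_append, List.mem_singleton]
    by_cases hj : j = i
    · exact Or.inr hj
    · exact Or.inl (hcomp j hj)
  · rw [adapted_append]
    refine ⟨hadr, adapted_cons_iff.mpr ⟨?_, trivial⟩⟩
    intro x hx1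
    have hxi : x ≠ i := by
      intro h; subst h
      rw [show D.dist x x = 0 from SimpleGraph.dist_self] at hx1
      exact absurd hx1 (by omega)
    have hcx : rest.count x = 1 := List.count_eq_one_of_mem hndr (hcomp x hxi)
    have hci : rest.count i = 0 := List.count_eq_zero_of_not_mem hir
    have hlt : ξ x < ξ i := hi x hx1
    show D.heightAfter (D.rHeight ξ i) rest x < D.heightAfter (D.rHeight ξ i) rest i
    simp only [heightAfter, rHeight, hcx, hci, if_pos, if_neg hxi]
    omega
  · rw [wordProd_append, wordProd_singleton, hτeq, ← mul_assoc, s_mul_s, one_mul]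

lemma gam_mem {ξ : D.I → ℤ} {τ : D.V ≃ₗ[ℚ] D.V} (hτ : D.IsCoxeterFor ξ τ) (j : D.I) :
    D.gam τ j ∈ D.Φ := by
  obtain ⟨l₀, hnd, hall, _, hprod⟩ := hτ
  obtain ⟨u, v, huv⟩ := List.append_of_mem (hall j)
  subst huv
  have hju : j ∉ u := fun hm => (List.nodup_append.mp hnd).2.2 j hm j List.mem_cons_self rfl
  have hjv : j ∉ v := (List.nodup_cons.mp (List.nodup_append.mp hnd).2.1).1
  have hτω : τ (D.ϖ j) = D.ϖ j - D.wordProd u (D.α j) := by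
    rw [← hprod, wordProd_append, wordProd_cons, mulApp, mulApp, wordProd_fix_omega hjv,
      s_omega_self, map_sub, wordProd_fix_omega hju]
  unfold gam
  rw [hτω, sub_sub_cancel]
  exact (wordProd_alpha_pos hju).1

lemma tau_omega_source {ξ : D.I → ℤ} {τ : D.V ≃ₗ[ℚ] D.V} (hτ : D.IsCoxeterFor ξ τ) {i : D.I}
    (hi : D.IsSource ξ i) : τ (D.ϖ i) = D.ϖ i - D.α i := by
  obtain ⟨rest, hir, _, _, _, hτeq⟩ := rearrange hτ hi
  rw [hτeq, mulApp, wordProd_fix_omega hir, s_omega_self]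

lemma gam_source {ξ : D.I → ℤ} {τ : D.V ≃ₗ[ℚ] D.V} (hτ : D.IsCoxeterFor ξ τ) {i : D.I}
    (hi : D.IsSource ξ i) : D.gam τ i = D.α i := by
  unfold gam
  rw [tau_omega_source hτ hi, sub_sub_cancel]

lemma main_induction : ∀ (l : List D.I) (ξ : D.I → ℤ) (τ : D.V ≃ₗ[ℚ] D.V),
    D.Adapted ξ l → D.IsCoxeterFor ξ τ → ∀ k : Fin l.length,
    ((D.hat τ)^[(l.take k.val).count (l.get k)] (D.gam τ (l.get k), (0:ℤ)) =
        (l.take k.val).foldr (fun i x => D.hat (D.s i) x) (D.α (l.get k), (0:ℤ))) ∧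
    D.wordProd (l.take (k.val + 1)) (D.ϖ (l.get k)) =
        (τ ^ ((l.take k.val).count (l.get k) + 1)) (D.ϖ (l.get k)) := by
  intro l
  induction l with
  | nil =>
    intro ξ τ _ _ k
    exact absurd k.isLt (by simp)
  | cons i l' ih =>
    intro ξ τ had hτ k
    obtain ⟨hsrc, had'⟩ := adapted_cons_iff.mp had
    obtain ⟨rest, hir, hndr, hcomp, hadr, hτeq⟩ := rearrange hτ hsrc
    have hτ' : D.IsCoxeterFor (D.rHeight ξ i) (D.s i * τ * D.s i) := coxeter_reflect hτ hsrc
    have hτ'eq : D.s i * τ * D.s i = D.wordProd rest * D.s i := by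
      rw [hτeq, ← mul_assoc, s_mul_s, one_mul]
    rw [hτ'eq] at hτ'
    obtain ⟨kv, hk⟩ := k
    cases kv with
    | zero =>
      have hget : (i :: l').get ⟨0, hk⟩ = i := rfl
      constructor
      · rw [hget]
        show (D.hat τ)^[List.count i []] (D.gam τ i, (0:ℤ)) = (D.α i, (0:ℤ))
        rw [List.count_nil, Function.iterate_zero, id_eq, gam_source hτ hsrc]
      · rw [hget]
        show D.wordProd [i] (D.ϖ i) = (τ ^ (List.count i [] + 1)) (D.ϖ i)
        rw [List.count_nil, wordProd_singleton, s_omega_self, zero_add, pow_one,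
          tau_omega_source hτ hsrc]
    | succ m =>
      have hm : m < l'.length := Nat.succ_lt_succ_iff.mp hk
      have IH := ih (D.rHeight ξ i) (D.wordProd rest * D.s i) had' hτ' ⟨m, hm⟩
      have hget : (i :: l').get ⟨m + 1, hk⟩ = l'.get ⟨m, hm⟩ := rfl
      have htake : (i :: l').take (m + 1) = i :: l'.take m := rfl
      have htake2 : (i :: l').take (m + 1 + 1) = i :: l'.take (m + 1) := rfl
      set j := l'.get ⟨m, hm⟩ with hjdef
      have hΦ'' : D.gam (D.wordProd rest * D.s i) j ∈ D.Φ := gam_mem hτ' j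
      constructor
      · rw [hget, htake, List.count_cons, List.foldr_cons, ← IH.1]
        simp only [beq_iff_eq]
        rw [hat_swap_iter hir ((l'.take m).count j) hΦ'']
        rw [← hτeq]
        by_cases hji : j = i
        · rw [if_pos hji.symm, hji]
          have hgτ : D.gam τ i = D.α i := gam_source hτ hsrc
          have hgam : D.gam (D.wordProd rest * D.s i) i = D.wordProd rest (D.α i) := by
            unfold gam
            have h1 : (D.wordProd rest * D.s i) (D.ϖ i) = D.ϖ i - D.wordProd rest (D.α i) := by
              show D.wordProd rest (D.s i (D.ϖ i)) = _
              rw [s_omega_self, map_sub, wordProd_fix_omega hir]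
            rw [h1, sub_sub_cancel]
          rw [hgτ, hgam, Function.iterate_succ_apply]
          congr 1
          rw [hτeq]
          by_cases hw : D.s i (D.wordProd rest (D.α i)) ∈ D.Φ
          · rw [hat_of_mem (show (D.s i * D.wordProd rest) ((D.α i, (0:ℤ)).1) ∈ D.Φ from hw),
              hat_of_mem (show D.s i ((D.wordProd rest (D.α i), (0:ℤ)).1) ∈ D.Φ from hw)]
            rfl
          · rw [hat_of_not_mem
                (show (D.s i * D.wordProd rest) ((D.α i, (0:ℤ)).1) ∉ D.Φ from hw),
              hat_of_not_mem
                (show D.s i ((D.wordProd rest (D.α i), (0:ℤ)).1) ∉ D.Φ from hw)]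
            rfl
        · rw [if_neg (fun h => hji h.symm), add_zero]
          have hij : i ≠ j := fun h => hji h.symm
          have hsg : D.s i (D.gam (D.wordProd rest * D.s i) j) = D.gam τ j := by
            unfold gam
            rw [map_sub]
            have h1 : (D.wordProd rest * D.s i) (D.ϖ j) = D.wordProd rest (D.ϖ j) := by
              show D.wordProd rest (D.s i (D.ϖ j)) = _
              rw [s_omega_ne hij]
            rw [h1, s_omega_ne hij, hτeq]
            rfl
          have hmem : D.s i ((D.gam (D.wordProd rest * D.s i) j, (0:ℤ)).1) ∈ D.Φ := by
            show D.s i (D.gam (D.wordProd rest * D.s i) j) ∈ D.Φ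
            rw [hsg]; exact gam_mem hτ j
          rw [hat_of_mem hmem]
          show (D.hat τ)^[(l'.take m).count j] (D.gam τ j, (0:ℤ)) =
            (D.hat τ)^[(l'.take m).count j] (D.s i (D.gam (D.wordProd rest * D.s i) j), (0:ℤ))
          rw [hsg]
      · rw [hget, htake, htake2, List.count_cons, wordProd_cons, mulApp, IH.2]
        simp only [beq_iff_eq]
        have hconj : (D.wordProd rest * D.s i) ^ ((l'.take m).count j + 1) =
            D.s i * τ ^ ((l'.take m).count j + 1) * D.s i := by
          rw [← hτ'eq, show D.s i * τ * D.s i = D.s i * τ * (D.s i)⁻¹ by rw [s_inv],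
            conj_pow, s_inv]
        rw [hconj]
        have happ : D.s i ((D.s i * τ ^ ((l'.take m).count j + 1) * D.s i) (D.ϖ j)) =
            (τ ^ ((l'.take m).count j + 1)) (D.s i (D.ϖ j)) := by
          show D.s i (D.s i ((τ ^ ((l'.take m).count j + 1)) (D.s i (D.ϖ j)))) = _
          rw [s_apply_s]
        rw [happ]
        by_cases hji : j = i
        · rw [if_pos hji.symm, hji, s_omega_self, ← tau_omega_source hτ hsrc]
          have hfin : (τ ^ (List.count i (List.take m l') + 1) * τ) (D.ϖ i) =
              (τ ^ (List.count i (List.take m l') + 1 + 1)) (D.ϖ i) := by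
            rw [← pow_succ]
          exact hfin
        · rw [if_neg (fun h => hji h.symm), add_zero, s_omega_ne (fun h => hji h.symm)]

end SSDatum
/-- Let `Q` be a Dynkin quiver on `Δ` with height function `ξ`, and let
`(i_k)_{1≤k≤r}` be a `Q`-adapted sequence in `I`. Set
`p_k := ξ_{i_k} − 2·|{s : 1 ≤ s < k, i_s = i_k}|`. Then:
(1) `p_a > p_b` whenever `a < b` and `d(i_a,i_b) ≤ 1`;
(2) `φ_Q(i_k,p_k) = ŝ_{i_1}⋯ŝ_{i_{k−1}}(α_{i_k}, 0)`;
(3) `s_{i_1}⋯s_{i_k}(ϖ_{i_k}) = τ_Q^{(ξ_{i_k}−p_k)/2+1}(ϖ_{i_k})`. -/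
theorem stmt6 (D : SSDatum) (ξ : D.I → ℤ) (hξ : D.IsHeight ξ)
    (τ : D.V ≃ₗ[ℚ] D.V) (hτ : D.IsCoxeterFor ξ τ)
    (l : List D.I) (hne : l ≠ []) (hl : D.Adapted ξ l)
    (p : Fin l.length → ℤ)
    (hp : ∀ k : Fin l.length, p k = ξ (l.get k) - 2 * ((l.take k.val).count (l.get k) : ℤ)) :
    (∀ a b : Fin l.length, a < b → D.dist (l.get a) (l.get b) ≤ 1 → p b < p a) ∧
    (∀ k : Fin l.length,
      D.phi ξ τ (l.get k) (p k) =
        (l.take k.val).foldr (fun i x => D.hat (D.s i) x) (D.α (l.get k), 0)) ∧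
    (∀ k : Fin l.length,
      D.wordProd (l.take (k.val + 1)) (D.ϖ (l.get k)) =
        (τ ^ ((ξ (l.get k) - p k) / 2 + 1)) (D.ϖ (l.get k))) := by
  classical
  have main := SSDatum.main_induction (D := D) l ξ τ hl hτ
  refine ⟨?_, ?_, ?_⟩
  · intro a b hab hd
    rw [hp a, hp b]
    have hab' : a.val < b.val := hab
    have hmono : ∀ x : D.I, (l.take a.val).count x ≤ (l.take b.val).count x := by
      intro x
      exact List.Sublist.count_le x (List.take_sublist_take_left (le_of_lt hab'))
    by_cases heq : l.get a = l.get b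
    · have hstep : (l.take (a.val + 1)).count (l.get a) =
          (l.take a.val).count (l.get a) + 1 := by
        rw [List.take_succ, List.getElem?_eq_getElem a.isLt, List.count_append]
        simp [List.get_eq_getElem]
      have hstep2 : (l.take (a.val + 1)).count (l.get a) ≤ (l.take b.val).count (l.get a) :=
        List.Sublist.count_le _ (List.take_sublist_take_left hab')
      rw [← heq]
      have h3 := hmono (l.get a)
      omega
    · have hne : D.dist (l.get a) (l.get b) ≠ 0 :=
        fun h0 => heq (SSDatum.eq_of_dist_eq_zero h0)
      have hdist1 : D.dist (l.get a) (l.get b) = 1 := by omega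
      have hsrc := SSDatum.adapted_get_source hl a
      have hlt := hsrc (l.get b) hdist1
      simp only [SSDatum.heightAfter] at hlt
      have h3 := hmono (l.get b)
      omega
  · intro k
    have hcnt := hp k
    have hle : p k ≤ ξ (l.get k) := by omega
    unfold SSDatum.phi
    rw [if_pos hle]
    have htn : ((ξ (l.get k) - p k) / 2).toNat = (l.take k.val).count (l.get k) := by omega
    rw [htn]
    exact (main k).1
  · intro k
    have hcnt := hp k
    have hexp : (ξ (l.get k) - p k) / 2 + 1 =
        (((l.take k.val).count (l.get k) + 1 : ℕ) : ℤ) := by push_cast; omega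
    rw [hexp, zpow_natCast]
    exact (main k).2
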